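/- Let n be even and a₃, a₁⊕a₃, a₂⊕a₃, a₁⊕a₂⊕a₃ be bent Boolean functions on 𝔽₂ⁿ satisfying W_{a₃}(u)·W_{a₁⊕a₂⊕a₃}(u) = W_{a₁⊕a₃}(u)·W_{a₂⊕a₃}(u) for all u. Then the Boolean function F(x, y₁, y₂) = y₁a₁(x) ⊕ y₂a₂(x) ⊕ a₃(x) on 𝔽₂^{n+2} is semibent: W_F takes only values in {0, ±2^{(n+4)/2}}. -/

import Mathlib

open Finset Complex

/-- Standard inner product on `𝔽₂ⁿ`. -/
def ip {n : ℕ} (u x : Fin n → ZMod 2) : ZMod 2 := ∑ i, u i * x i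

/-- Walsh–Hadamard transform of a Boolean function. -/
noncomputable def WHT {n : ℕ} (g : (Fin n → ZMod 2) → ZMod 2) (u : Fin n → ZMod 2) : ℂ :=
  ∑ x : Fin n → ZMod 2, (-1 : ℂ) ^ ((g x + ip u x).val)

/-- Generalized Walsh–Hadamard transform of `f : 𝔽₂ⁿ → ℤ_q`. -/
noncomputable def GWT {n : ℕ} (q : ℕ) [NeZero q] (f : (Fin n → ZMod 2) → ZMod q)
    (u : Fin n → ZMod 2) : ℂ :=
  ∑ x : Fin n → ZMod 2,
    Complex.exp (2 * Real.pi * Complex.I * ((f x).val : ℂ) / (q : ℂ)) *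
      (-1 : ℂ) ^ ((ip u x).val)


/-- Walsh–Hadamard transform on `𝔽₂ⁿ × 𝔽₂ × 𝔽₂`. -/
noncomputable def WHT3 {n : ℕ} (F : (Fin n → ZMod 2) × ZMod 2 × ZMod 2 → ZMod 2)
    (u : Fin n → ZMod 2) (v1 v2 : ZMod 2) : ℂ :=
  ∑ z : (Fin n → ZMod 2) × ZMod 2 × ZMod 2,
    (-1 : ℂ) ^ ((F z + ip u z.1 + v1 * z.2.1 + v2 * z.2.2).val)

lemma neg_one_pow_add (a b : ZMod 2) :
    (-1 : ℂ) ^ ((a + b).val) = (-1) ^ a.val * (-1) ^ b.val := by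
  rw [ZMod.val_add, ← pow_add, ← neg_one_pow_eq_pow_mod_two]

lemma zmod2_sum (f : ZMod 2 → ℂ) : ∑ y : ZMod 2, f y = f 0 + f 1 := by
  rw [show (univ : Finset (ZMod 2)) = {0, 1} from by decide]
  rw [Finset.sum_pair (by decide)]

lemma WHT_real {n : ℕ} (g : (Fin n → ZMod 2) → ZMod 2) (u : Fin n → ZMod 2) :
    ∃ r : ℝ, WHT g u = (r : ℂ) := by
  refine ⟨∑ x : Fin n → ZMod 2, (-1 : ℝ) ^ ((g x + ip u x).val), ?_⟩
  rw [WHT]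
  push_cast
  rfl

lemma key_alg (t A B C D e1 e2 : ℂ) (ht : t ≠ 0)
    (hA : A = t ∨ A = -t) (hB : B = t ∨ B = -t) (hC : C = t ∨ C = -t) (hD : D = t ∨ D = -t)
    (he1 : e1 = 1 ∨ e1 = -1) (he2 : e2 = 1 ∨ e2 = -1)
    (hp : A * D = B * C) :
    A + e1 * B + e2 * C + e1 * e2 * D = 0 ∨
    A + e1 * B + e2 * C + e1 * e2 * D = 4 * t ∨
    A + e1 * B + e2 * C + e1 * e2 * D = -(4 * t) := by
  rcases hA with rfl | rfl <;> rcases hB with rfl | rfl <;> rcases hC with rfl | rfl <;>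
    rcases hD with rfl | rfl <;> rcases he1 with rfl | rfl <;> rcases he2 with rfl | rfl <;>
    first
      | (left; ring1)
      | (right; left; ring1)
      | (right; right; ring1)
      | (exact absurd (mul_self_eq_zero.mp (by linear_combination hp / 2)) ht)
      | (exact absurd (mul_self_eq_zero.mp (by linear_combination -hp / 2)) ht)

lemma fiber {n : ℕ} (a1 a2 a3 : (Fin n → ZMod 2) → ZMod 2) (u : Fin n → ZMod 2)
    (v1 v2 y1 y2 : ZMod 2) :
    ∑ x : Fin n → ZMod 2,
      (-1 : ℂ) ^ ((y1 * a1 x + y2 * a2 x + a3 x + ip u x + v1 * y1 + v2 * y2).val) =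
    (-1 : ℂ) ^ ((v1 * y1).val) * (-1 : ℂ) ^ ((v2 * y2).val) *
      WHT (fun x => y1 * a1 x + y2 * a2 x + a3 x) u := by
  rw [WHT, Finset.mul_sum]
  apply Finset.sum_congr rfl
  intro x _
  rw [neg_one_pow_add, neg_one_pow_add]
  ring

theorem semibent_of_bent_components (n : ℕ) (hn : Even n)
    (a1 a2 a3 : (Fin n → ZMod 2) → ZMod 2)
    (hb0 : ∀ u, ‖WHT a3 u‖ = 2 ^ (n / 2))
    (hb1 : ∀ u, ‖WHT (fun x => a1 x + a3 x) u‖ = 2 ^ (n / 2))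
    (hb2 : ∀ u, ‖WHT (fun x => a2 x + a3 x) u‖ = 2 ^ (n / 2))
    (hb12 : ∀ u, ‖WHT (fun x => a1 x + a2 x + a3 x) u‖ = 2 ^ (n / 2))
    (hprod : ∀ u, WHT a3 u * WHT (fun x => a1 x + a2 x + a3 x) u =
        WHT (fun x => a1 x + a3 x) u * WHT (fun x => a2 x + a3 x) u) :
    ∀ (u : Fin n → ZMod 2) (v1 v2 : ZMod 2),
      WHT3 (fun z => z.2.1 * a1 z.1 + z.2.2 * a2 z.1 + a3 z.1) u v1 v2 = 0 ∨
      WHT3 (fun z => z.2.1 * a1 z.1 + z.2.2 * a2 z.1 + a3 z.1) u v1 v2 = 2 ^ ((n + 4) / 2) ∨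
      WHT3 (fun z => z.2.1 * a1 z.1 + z.2.2 * a2 z.1 + a3 z.1) u v1 v2 = -2 ^ ((n + 4) / 2) := by
  intro u v1 v2
  set t : ℂ := (2 : ℂ) ^ (n / 2) with hT
  have ht : t ≠ 0 := pow_ne_zero _ two_ne_zero
  -- each bent Walsh value is ± t
  have pm : ∀ g : (Fin n → ZMod 2) → ZMod 2,
      ‖WHT g u‖ = 2 ^ (n / 2) → WHT g u = t ∨ WHT g u = -t := by
    intro g hg
    obtain ⟨r, hr⟩ := WHT_real g u
    rw [hr, Complex.norm_real, Real.norm_eq_abs] at hg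
    have h2 : r = 2 ^ (n / 2) ∨ r = -(2 ^ (n / 2)) :=
      (abs_eq (by positivity)).mp hg
    rcases h2 with h | h
    · left; rw [hr, h, hT]; push_cast; ring
    · right; rw [hr, h, hT]; push_cast; ring
  -- function identities
  have h00 : (fun x => (0 : ZMod 2) * a1 x + (0 : ZMod 2) * a2 x + a3 x) = a3 := by
    funext x; ring
  have h10 : (fun x => (1 : ZMod 2) * a1 x + (0 : ZMod 2) * a2 x + a3 x)
      = (fun x => a1 x + a3 x) := by funext x; ring
  have h01 : (fun x => (0 : ZMod 2) * a1 x + (1 : ZMod 2) * a2 x + a3 x)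
      = (fun x => a2 x + a3 x) := by funext x; ring
  have h11 : (fun x => (1 : ZMod 2) * a1 x + (1 : ZMod 2) * a2 x + a3 x)
      = (fun x => a1 x + a2 x + a3 x) := by funext x; ring
  -- the decomposition
  have hd : WHT3 (fun z => z.2.1 * a1 z.1 + z.2.2 * a2 z.1 + a3 z.1) u v1 v2 =
      WHT a3 u + (-1 : ℂ) ^ v1.val * WHT (fun x => a1 x + a3 x) u
      + (-1 : ℂ) ^ v2.val * WHT (fun x => a2 x + a3 x) u
      + (-1 : ℂ) ^ v1.val * (-1 : ℂ) ^ v2.val * WHT (fun x => a1 x + a2 x + a3 x) u := by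
    rw [WHT3, Fintype.sum_prod_type, Finset.sum_comm, Fintype.sum_prod_type]
    simp only [zmod2_sum]
    rw [fiber a1 a2 a3 u v1 v2 0 0, fiber a1 a2 a3 u v1 v2 0 1,
      fiber a1 a2 a3 u v1 v2 1 0, fiber a1 a2 a3 u v1 v2 1 1]
    rw [h00, h10, h01, h11]
    simp only [mul_zero, mul_one, ZMod.val_zero, pow_zero, one_mul]
    ring
  -- signs
  have he : ∀ v : ZMod 2, (-1 : ℂ) ^ v.val = 1 ∨ (-1 : ℂ) ^ v.val = -1 := by
    intro v
    rcases Nat.even_or_odd v.val with h | h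
    · left; exact h.neg_one_pow
    · right; exact h.neg_one_pow
  have key := key_alg t (WHT a3 u) (WHT (fun x => a1 x + a3 x) u)
    (WHT (fun x => a2 x + a3 x) u) (WHT (fun x => a1 x + a2 x + a3 x) u)
    ((-1 : ℂ) ^ v1.val) ((-1 : ℂ) ^ v2.val) ht
    (pm _ (hb0 u)) (pm _ (hb1 u)) (pm _ (hb2 u)) (pm _ (hb12 u))
    (he v1) (he v2) (hprod u)
  have hexp : (2 : ℂ) ^ ((n + 4) / 2) = 4 * t := by
    rw [show (n + 4) / 2 = n / 2 + 2 from by omega, pow_add, hT]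
    ring
  rw [hd, hexp]
  rcases key with h | h | h
  · exact Or.inl h
  · exact Or.inr (Or.inl h)
  · exact Or.inr (Or.inr (by rw [h]))
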